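/- The unique Laurent series solution x ∈ ℚ((t⁻¹)) of degree ≥ 1 of the cubic equation 3x³ − 3tx² − 9x + t = 0 satisfies the Riccati differential equation (t² + 9)x' = 1 + x². -/

import Mathlib

open Polynomial
open Pointwise

/-- The formal derivative (with respect to `X`) of a formal Laurent series. -/
noncomputable def lsDeriv {F : Type*} [Field F] (f : LaurentSeries F) : LaurentSeries F where
  coeff n := (n + 1 : ℤ) * f.coeff (n + 1)
  isPWO_support' := by
    refine ((HahnSeries.single (-1 : ℤ) (1 : F) * f).isPWO_support).mono ?_
    intro n hn
    have hf : f.coeff (n + 1) ≠ 0 := by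
      intro h
      apply hn
      simp [h]
    have hcoeff : (HahnSeries.single (-1 : ℤ) (1 : F) * f).coeff n = f.coeff (n + 1) := by
      have := HahnSeries.coeff_single_mul_add (r := (1 : F)) (x := f) (b := (-1 : ℤ)) (a := n + 1)
      simpa using this
    simp only [HahnSeries.mem_support, hcoeff]
    exact hf

lemma lsDeriv_coeff {F : Type*} [Field F] (f : LaurentSeries F) (n : ℤ) :
    (lsDeriv f).coeff n = (n + 1 : ℤ) * f.coeff (n + 1) := rfl

lemma lsDeriv_mul {F : Type*} [Field F] (f g : LaurentSeries F) :
    lsDeriv (f * g) = lsDeriv f * g + f * lsDeriv g := by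
  ext n
  have hsf : ((f.support + ({-1} : Set ℤ))).IsPWO :=
    f.isPWO_support.add (Set.finite_singleton _).isPWO
  have hsg : ((g.support + ({-1} : Set ℤ))).IsPWO :=
    g.isPWO_support.add (Set.finite_singleton _).isPWO
  have hfsub : (lsDeriv f).support ⊆ f.support + ({-1} : Set ℤ) := by
    intro i hi
    have : f.coeff (i + 1) ≠ 0 := by
      intro h; apply hi; simp [lsDeriv_coeff, h]
    exact ⟨i + 1, this, -1, rfl, by ring⟩
  have hgsub : (lsDeriv g).support ⊆ g.support + ({-1} : Set ℤ) := by
    intro i hi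
    have : g.coeff (i + 1) ≠ 0 := by
      intro h; apply hi; simp [lsDeriv_coeff, h]
    exact ⟨i + 1, this, -1, rfl, by ring⟩
  rw [HahnSeries.coeff_add, lsDeriv_coeff, HahnSeries.coeff_mul,
    HahnSeries.coeff_mul_left' hsf hfsub, HahnSeries.coeff_mul_right' hsg hgsub,
    Finset.mul_sum]
  have h1 : ∑ ij ∈ Finset.antidiagonal hsf g.isPWO_support n,
      (lsDeriv f).coeff ij.1 * g.coeff ij.2
      = ∑ ij ∈ Finset.antidiagonal f.isPWO_support g.isPWO_support (n + 1),
        (ij.1 : ℤ) * f.coeff ij.1 * g.coeff ij.2 := by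
    refine Finset.sum_nbij' (fun p => (p.1 + 1, p.2)) (fun p => (p.1 - 1, p.2)) ?_ ?_ ?_ ?_ ?_
    · intro p hp
      rw [Finset.mem_addAntidiagonal] at hp
      obtain ⟨⟨a, ha, b, hb, hab⟩, h2, h3⟩ := hp
      rcases hb with rfl
      have hab' : a + -1 = p.1 := hab
      rw [Finset.mem_addAntidiagonal]
      have hpa : p.1 + 1 = a := by omega
      have hm : p.1 + 1 ∈ f.support := by rw [hpa]; exact ha
      exact ⟨hm, h2, by dsimp only; omega⟩
    · intro p hp
      rw [Finset.mem_addAntidiagonal] at hp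
      obtain ⟨h1, h2, h3⟩ := hp
      rw [Finset.mem_addAntidiagonal]
      exact ⟨⟨p.1, h1, -1, rfl, show p.1 + -1 = p.1 - 1 by ring⟩, h2, by dsimp only; omega⟩
    · intro p _; simp
    · intro p _; simp
    · intro p _
      dsimp only
      rw [lsDeriv_coeff]
  have h2 : ∑ ij ∈ Finset.antidiagonal f.isPWO_support hsg n,
      f.coeff ij.1 * (lsDeriv g).coeff ij.2
      = ∑ ij ∈ Finset.antidiagonal f.isPWO_support g.isPWO_support (n + 1),
        f.coeff ij.1 * ((ij.2 : ℤ) * g.coeff ij.2) := by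
    refine Finset.sum_nbij' (fun p => (p.1, p.2 + 1)) (fun p => (p.1, p.2 - 1)) ?_ ?_ ?_ ?_ ?_
    · intro p hp
      rw [Finset.mem_addAntidiagonal] at hp
      obtain ⟨h1, ⟨a, ha, b, hb, hab⟩, h3⟩ := hp
      rcases hb with rfl
      have hab' : a + -1 = p.2 := hab
      rw [Finset.mem_addAntidiagonal]
      have hpa : p.2 + 1 = a := by omega
      have hm : p.2 + 1 ∈ g.support := by rw [hpa]; exact ha
      exact ⟨h1, hm, by dsimp only; omega⟩
    · intro p hp
      rw [Finset.mem_addAntidiagonal] at hp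
      obtain ⟨h1, h2, h3⟩ := hp
      rw [Finset.mem_addAntidiagonal]
      exact ⟨h1, ⟨p.2, h2, -1, rfl, show p.2 + -1 = p.2 - 1 by ring⟩, by dsimp only; omega⟩
    · intro p _; simp
    · intro p _; simp
    · intro p _
      dsimp only
      rw [lsDeriv_coeff]
  rw [h1, h2, ← Finset.sum_add_distrib]
  apply Finset.sum_congr rfl
  intro p hp
  rw [Finset.mem_addAntidiagonal] at hp
  rw [← hp.2.2]
  push_cast
  ring

lemma lsDeriv_add {F : Type*} [Field F] (f g : LaurentSeries F) :
    lsDeriv (f + g) = lsDeriv f + lsDeriv g := by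
  ext n
  simp [lsDeriv_coeff, mul_add]

lemma lsDeriv_sub {F : Type*} [Field F] (f g : LaurentSeries F) :
    lsDeriv (f - g) = lsDeriv f - lsDeriv g := by
  ext n
  simp [lsDeriv_coeff, mul_sub]

lemma lsDeriv_single {F : Type*} [Field F] (a : ℤ) (c : F) :
    lsDeriv (HahnSeries.single a c) = HahnSeries.single (a - 1) ((a : F) * c) := by
  ext n
  rw [lsDeriv_coeff]
  rcases eq_or_ne n (a - 1) with rfl | h
  · simp
  · rw [HahnSeries.coeff_single_of_ne h, HahnSeries.coeff_single_of_ne (by omega)]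
    ring


/-- `t`, as an element of `ℚ((t⁻¹))`: the field of Laurent series in `X = t⁻¹`,
so `t = X⁻¹` is the Hahn series with a single coefficient `1` in degree `-1`. -/
noncomputable def lsT : LaurentSeries ℚ := HahnSeries.single (-1 : ℤ) 1

/-- The formal derivative with respect to `t` on `ℚ((t⁻¹))`: since `X = t⁻¹`,
`d/dt = -X² · d/dX`. -/
noncomputable def tDeriv (f : LaurentSeries ℚ) : LaurentSeries ℚ :=
  -(HahnSeries.single (2 : ℤ) (1 : ℚ)) * lsDeriv f

lemma tDeriv_add (f g : LaurentSeries ℚ) : tDeriv (f + g) = tDeriv f + tDeriv g := by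
  unfold tDeriv; rw [lsDeriv_add]; ring

lemma tDeriv_sub (f g : LaurentSeries ℚ) : tDeriv (f - g) = tDeriv f - tDeriv g := by
  unfold tDeriv; rw [lsDeriv_sub]; ring

lemma tDeriv_mul (f g : LaurentSeries ℚ) : tDeriv (f * g) = tDeriv f * g + f * tDeriv g := by
  unfold tDeriv; rw [lsDeriv_mul]; ring

lemma tDeriv_t : tDeriv lsT = 1 := by
  unfold tDeriv lsT
  rw [lsDeriv_single]
  have hneg : -(HahnSeries.single (2 : ℤ) (1 : ℚ)) = HahnSeries.single (2 : ℤ) (-1 : ℚ) := by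
    ext n
    rw [HahnSeries.coeff_neg, HahnSeries.coeff_single, HahnSeries.coeff_single]
    split <;> simp
  rw [hneg, HahnSeries.single_mul_single]
  norm_num

lemma tDeriv_C (c : ℚ) : tDeriv (HahnSeries.single (0 : ℤ) c) = 0 := by
  unfold tDeriv
  rw [lsDeriv_single]
  simp

lemma tDeriv_ofNat (n : ℕ) [n.AtLeastTwo] :
    tDeriv (OfNat.ofNat n : LaurentSeries ℚ) = 0 := by
  have : (OfNat.ofNat n : LaurentSeries ℚ) = HahnSeries.single (0 : ℤ) (OfNat.ofNat n : ℚ) := by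
    rw [← map_ofNat (HahnSeries.C (Γ := ℤ) (R := ℚ)) n]
    rfl
  rw [this, tDeriv_C]

lemma tDeriv_zero : tDeriv (0 : LaurentSeries ℚ) = 0 := by
  have h := tDeriv_C 0
  rwa [HahnSeries.single_eq_zero] at h

lemma three_eq_single : (3 : LaurentSeries ℚ) = HahnSeries.single (0 : ℤ) (3 : ℚ) := by
  rw [← map_ofNat (HahnSeries.C (Γ := ℤ) (R := ℚ)) 3]
  rfl


/-- The unique Laurent series solution `x ∈ ℚ((t⁻¹))` of degree ≥ 1 (i.e. `x.order ≤ -1`,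
where the degree of a Laurent series is minus its order) of the cubic equation
`3x³ − 3tx² − 9x + t = 0` satisfies the Riccati differential equation
`(t² + 9)x' = 1 + x²`. -/
theorem riccati_of_cubic_no1 (x : LaurentSeries ℚ)
    (hroot : 3 * x ^ 3 - 3 * lsT * x ^ 2 - 9 * x + lsT = 0)
    (hdeg : x.order ≤ -1) :
    (lsT ^ 2 + 9) * tDeriv x = 1 + x ^ 2 := by
  have hx0 : x ≠ 0 := by
    intro h
    rw [h, HahnSeries.order_zero] at hdeg
    omega
  have hne : (1 : LaurentSeries ℚ) - 3 * x ^ 2 ≠ 0 := by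
    intro h
    have h1 : (3 : LaurentSeries ℚ) * x ^ 2 = 1 := by linear_combination -h
    have hx2ne : x ^ 2 ≠ 0 := pow_ne_zero _ hx0
    have h3ne : (3 : LaurentSeries ℚ) ≠ 0 := by
      rw [three_eq_single]
      exact HahnSeries.single_ne_zero (by norm_num)
    have ho1 : ((3 : LaurentSeries ℚ) * x ^ 2).order = (0 : ℤ) := by
      rw [h1, HahnSeries.order_one]
    have ho2 : ((3 : LaurentSeries ℚ) * x ^ 2).order = (3 : LaurentSeries ℚ).order + (x ^ 2).order :=
      HahnSeries.order_mul h3ne hx2ne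
    have ho3 : (3 : LaurentSeries ℚ).order = 0 := by
      rw [three_eq_single]
      exact HahnSeries.order_single (by norm_num)
    have ho4 : (x ^ 2).order = x.order + x.order := by
      rw [sq]
      exact HahnSeries.order_mul hx0 hx0
    rw [ho2, ho3, ho4] at ho1
    omega
  have hx2 : tDeriv (x ^ 2) = 2 * x * tDeriv x := by
    rw [sq, tDeriv_mul]; ring
  have hx3 : tDeriv (x ^ 3) = 3 * x ^ 2 * tDeriv x := by
    rw [pow_succ, tDeriv_mul, hx2, sq]; ring
  have hd := congrArg tDeriv hroot
  rw [tDeriv_zero] at hd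
  have ht3 : tDeriv (3 : LaurentSeries ℚ) = 0 := tDeriv_ofNat 3
  have ht9 : tDeriv (9 : LaurentSeries ℚ) = 0 := tDeriv_ofNat 9
  simp only [tDeriv_add, tDeriv_sub, tDeriv_mul, tDeriv_t, ht3, ht9, hx2, hx3] at hd
  have h0 : (9 * x ^ 2 - 6 * lsT * x - 9) * tDeriv x + (1 - 3 * x ^ 2) = 0 := by
    linear_combination hd
  have key : (1 - 3 * x ^ 2) * ((lsT ^ 2 + 9) * tDeriv x - (1 + x ^ 2)) = 0 := by
    linear_combination (-(1 + x ^ 2)) * h0 + ((3 * x + lsT) * tDeriv x) * hroot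
  rcases mul_eq_zero.mp key with h | h
  · exact absurd h hne
  · exact sub_eq_zero.mp h
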